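/- For a well-centered triangle (containing its circumcenter), the ratio l*/l of the dual edge length (distance from the circumcenter to the edge midpoint, summed over the two triangles sharing the edge) to the primal edge length equals (cot α + cot β)/2, where α, β are the angles opposite the edge in the two adjacent triangles; in particular the DEC Laplacian weights coincide with the classical cotangent weights. -/

import Mathlib

open EuclideanGeometry

private lemma dec_cot_aux
    (A B C O : EuclideanSpace ℝ (Fin 2))
    (hABC : AffineIndependent ℝ ![A, B, C])
    (R : ℝ)
    (hOA : dist O A = R) (hOB : dist O B = R) (hOC : dist O C = R)
    (hα : ∠ B A C < Real.pi / 2) :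
    dist O (midpoint ℝ B C) / dist B C =
      Real.cos (∠ B A C) / Real.sin (∠ B A C) / 2 := by
  haveI : Fact (Module.finrank ℝ (EuclideanSpace ℝ (Fin 2)) = 2) := ⟨by simp⟩
  haveI : Module.Oriented ℝ (EuclideanSpace ℝ (Fin 2)) (Fin 2) :=
    ⟨(EuclideanSpace.basisFun (Fin 2) ℝ).toBasis.orientation⟩
  have hBA : B ≠ A := by
    have := hABC.injective.ne (show (1 : Fin 3) ≠ 0 by decide); simpa using this
  have hCA : C ≠ A := by
    have := hABC.injective.ne (show (2 : Fin 3) ≠ 0 by decide); simpa using this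
  have hBC : B ≠ C := by
    have := hABC.injective.ne (show (1 : Fin 3) ≠ 2 by decide); simpa using this
  have hdBC : 0 < dist B C := dist_pos.2 hBC
  have hR0 : 0 < R := by
    rcases lt_or_ge 0 R with h | h
    · exact h
    · exfalso
      have h1 : dist O B = 0 := le_antisymm (hOB.le.trans h) dist_nonneg
      have h2 : dist O C = 0 := le_antisymm (hOC.le.trans h) dist_nonneg
      exact hBC (by rw [← dist_eq_zero.1 h1, ← dist_eq_zero.1 h2])
  -- law of sines via the circumsphere
  set s : EuclideanGeometry.Sphere (EuclideanSpace ℝ (Fin 2)) := ⟨O, R⟩ with hs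
  have hBs : B ∈ s := by
    simp only [EuclideanGeometry.mem_sphere, hs, dist_comm B O]; exact hOB
  have hAs : A ∈ s := by
    simp only [EuclideanGeometry.mem_sphere, hs, dist_comm A O]; exact hOA
  have hCs : C ∈ s := by
    simp only [EuclideanGeometry.mem_sphere, hs, dist_comm C O]; exact hOC
  have hlaw := EuclideanGeometry.Sphere.dist_div_sin_oangle_eq_two_mul_radius
    hBs hAs hCs hBA hBC (Ne.symm hCA)
  have hangle : ∠ B A C = |(∡ B A C).toReal| :=
    EuclideanGeometry.angle_eq_abs_oangle_toReal hBA hCA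
  have hsineq : Real.sin (∠ B A C) = |Real.Angle.sin (∡ B A C)| := by
    rw [hangle]
    rw [show Real.Angle.sin (∡ B A C) = Real.sin (∡ B A C).toReal by
      conv_lhs => rw [← Real.Angle.coe_toReal (∡ B A C)]
      exact Real.Angle.sin_coe _]
    rcases abs_choice (∡ B A C).toReal with h | h
    · rw [h]; exact (abs_of_nonneg (Real.sin_nonneg_of_nonneg_of_le_pi
        (by rw [← h]; exact abs_nonneg _) (by rw [← h]; exact Real.Angle.abs_toReal_le_pi _))).symm
    · have hle : (∡ B A C).toReal ≤ 0 := by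
        by_contra hpos
        push_neg at hpos
        rw [abs_of_pos hpos] at h
        linarith
      rw [h, Real.sin_neg, abs_of_nonpos
        (Real.sin_nonpos_of_nonpos_of_neg_pi_le hle
          (Real.Angle.neg_pi_lt_toReal (∡ B A C)).le)]
  rw [← hsineq] at hlaw
  have hrad : s.radius = R := rfl
  rw [hrad] at hlaw
  have hsin_pos : 0 < Real.sin (∠ B A C) := by
    rcases (Real.sin_nonneg_of_nonneg_of_le_pi (EuclideanGeometry.angle_nonneg B A C)
      (EuclideanGeometry.angle_le_pi B A C)).lt_or_eq with h | h
    · exact h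
    · exfalso
      rw [← h, div_zero] at hlaw
      linarith
  have hl : dist B C = 2 * R * Real.sin (∠ B A C) := by
    field_simp at hlaw
    linarith
  -- Pythagoras via the parallelogram law
  have hm : O - midpoint ℝ B C = (2⁻¹ : ℝ) • ((O - B) + (O - C)) := by
    rw [midpoint_eq_smul_add, invOf_eq_inv]
    module
  have h1 : dist O (midpoint ℝ B C) = ‖(O - B) + (O - C)‖ / 2 := by
    rw [dist_eq_norm, hm, norm_smul]
    simp
    ring
  have h2 : dist B C = ‖(O - B) - (O - C)‖ := by
    rw [dist_comm, dist_eq_norm]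
    congr 1
    abel
  have hpar := parallelogram_law_with_norm ℝ (O - B) (O - C)
  have hnB : ‖O - B‖ = R := by rw [← dist_eq_norm]; exact hOB
  have hnC : ‖O - C‖ = R := by rw [← dist_eq_norm]; exact hOC
  rw [hnB, hnC] at hpar
  have hpyth : (2 * dist O (midpoint ℝ B C)) ^ 2 + dist B C ^ 2 = 4 * R ^ 2 := by
    rw [h1, h2]
    linear_combination hpar
  have hcos_nonneg : 0 ≤ Real.cos (∠ B A C) :=
    Real.cos_nonneg_of_mem_Icc ⟨by linarith [EuclideanGeometry.angle_nonneg B A C,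
      Real.pi_pos], hα.le⟩
  have hd : dist O (midpoint ℝ B C) = R * Real.cos (∠ B A C) := by
    obtain ⟨d, hdd⟩ : ∃ d, dist O (midpoint ℝ B C) = d := ⟨_, rfl⟩
    rw [hdd] at hpyth ⊢
    have h0 : (0 : ℝ) ≤ d := hdd ▸ dist_nonneg
    have hl2 : dist B C ^ 2 = 4 * R ^ 2 * Real.sin (∠ B A C) ^ 2 := by rw [hl]; ring
    have hsq : d ^ 2 = (R * Real.cos (∠ B A C)) ^ 2 := by
      linear_combination hpyth / 4 - hl2 / 4 - R ^ 2 * Real.sin_sq_add_cos_sq (∠ B A C)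
    have h0' : 0 ≤ R * Real.cos (∠ B A C) := mul_nonneg hR0.le hcos_nonneg
    calc d = Real.sqrt (d ^ 2) := (Real.sqrt_sq h0).symm
      _ = Real.sqrt ((R * Real.cos (∠ B A C)) ^ 2) := by rw [hsq]
      _ = R * Real.cos (∠ B A C) := Real.sqrt_sq h0'
  rw [hd, hl]
  field_simp

/-- Cotangent weights: for an edge `BC` shared by two well-centered triangles
`ABC` and `DBC` with circumcenters `O₁`, `O₂`, the ratio of the dual edge
length (sum of distances from each circumcenter to the midpoint of `BC`) to the
primal length `|BC|` equals `(cot α + cot β)/2`, where `α = ∠BAC`, `β = ∠BDC`. -/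
theorem dec_cotangent_weights
    (A B C D O₁ O₂ : EuclideanSpace ℝ (Fin 2))
    (hABC : AffineIndependent ℝ ![A, B, C])
    (hDBC : AffineIndependent ℝ ![D, B, C])
    (R₁ R₂ : ℝ)
    (hO₁ : dist O₁ A = R₁ ∧ dist O₁ B = R₁ ∧ dist O₁ C = R₁)
    (hO₂ : dist O₂ D = R₂ ∧ dist O₂ B = R₂ ∧ dist O₂ C = R₂)
    (hα : ∠ B A C < Real.pi / 2) (hβ : ∠ B D C < Real.pi / 2) :
    (dist O₁ (midpoint ℝ B C) + dist O₂ (midpoint ℝ B C)) / dist B C =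
      (Real.cos (∠ B A C) / Real.sin (∠ B A C)
        + Real.cos (∠ B D C) / Real.sin (∠ B D C)) / 2 := by
  rw [add_div, dec_cot_aux A B C O₁ hABC R₁ hO₁.1 hO₁.2.1 hO₁.2.2 hα,
    dec_cot_aux D B C O₂ hDBC R₂ hO₂.1 hO₂.2.1 hO₂.2.2 hβ]
  ring
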